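/- Let p be an odd prime, r ≥ 1, and for each l ∈ {0,…,p−1} let D_l = {u : 0 ≤ u < p^{r+1}, gcd(u,p)=1, H_{r−1}(u)=l}. Then for every l, the map u ↦ u mod p^r from D_l to (Z/p^r)^* is a bijection; in particular |D_l| = p^{r−1}(p−1). -/

import Mathlib

/-- The Euler quotient `Q_t(u)` modulo `p^t`, zero when `gcd(u,p) > 1` (and `Q_0 = 0`). -/
def eulerQuotient (p t u : ℕ) : ℕ :=
  if Nat.Coprime u p then (u ^ (p ^ t).totient - 1) / p ^ t % p ^ t else 0

/-- The highest-level quotient `H_{r-1}(u) = (Q_r(u) - Q_{r-1}(u))/p^{r-1} mod p`. -/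
def levelQuotient (p r u : ℕ) : ℕ :=
  ((((eulerQuotient p r u : ℤ) - (eulerQuotient p (r - 1) u : ℤ)) / (p : ℤ) ^ (r - 1))
    % (p : ℤ)).toNat

lemma int_add_pow (a k : ℤ) : ∀ m : ℕ, ∃ z : ℤ, (a + k)^m = a^m + m * a^(m-1) * k + z * k^2
  | 0 => ⟨0, by norm_num⟩
  | (n+1) => by
    obtain ⟨z, hz⟩ := int_add_pow a k n
    refine ⟨(n:ℤ) * a^(n-1) + z*(a+k), ?_⟩
    have h : (a+k)^(n+1) = (a+k)^n * (a+k) := pow_succ ..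
    rw [h, hz]
    cases n with
    | zero => ring
    | succ m => push_cast; ring

lemma int_one_add_pow (y : ℤ) : ∀ n : ℕ, ∃ z : ℤ, (1+y)^n = 1 + n*y + (n.choose 2)*y^2 + z*y^3
  | 0 => ⟨0, by norm_num⟩
  | (n+1) => by
    obtain ⟨z, hz⟩ := int_one_add_pow y n
    refine ⟨(n.choose 2 : ℤ) + z*(1+y), ?_⟩
    rw [pow_succ, hz, Nat.choose_succ_succ n 1, Nat.choose_one_right]
    push_cast; ring

lemma key2 {p : ℕ} (hp : p.Prime) (hodd : Odd p) {s : ℕ} (hs : 1 ≤ s) (x : ℤ) :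
    (p:ℤ)^(2*s+1) ∣ (1 + x*(p:ℤ)^s)^p - 1 - x*(p:ℤ)^(s+1) := by
  obtain ⟨z, hz⟩ := int_one_add_pow (x*(p:ℤ)^s) p
  rw [hz]
  obtain ⟨c, hc⟩ : (p:ℕ) ∣ p.choose 2 := hp.dvd_choose_self (by norm_num)
    (by have := hp.two_le; rcases hodd with ⟨t, ht⟩; omega)
  refine ⟨c*x^2 + z*x^3*(p:ℤ)^(s-1), ?_⟩
  have h1 : (p:ℤ)^(s+1) = (p:ℤ)^s * p := pow_succ ..
  have h2 : ((p:ℤ)^s)^2 = (p:ℤ)^(2*s) := by rw [← pow_mul]; ring_nf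
  have h4 : ((p:ℤ)^s)^3 = (p:ℤ)^(3*s) := by rw [← pow_mul]; ring_nf
  have h5 : (p:ℤ)^(2*s+1) = (p:ℤ)^(2*s) * p := pow_succ ..
  rw [hc]
  push_cast
  rw [mul_pow, mul_pow, h2, h4]
  have h6 : (p:ℤ)^(3*s) = (p:ℤ)^(2*s) * p * (p:ℤ)^(s-1) := by
    rw [mul_assoc, ← pow_succ']
    rw [← pow_add]; congr 1; omega
  linear_combination z*x^3*h6 + (c:ℤ)*x^2*h5 - x*h1

lemma coprime_ne_zero {p w : ℕ} (hp : p.Prime) (hw : Nat.Coprime w p) : w ≠ 0 := by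
  rintro rfl
  simp [Nat.coprime_zero_left] at hw
  exact hp.one_lt.ne' hw

lemma euler_dvd {p : ℕ} (hp : p.Prime) (t w : ℕ) (hw : Nat.Coprime w p) :
    (p:ℤ)^t ∣ (w:ℤ)^((p^t).totient) - 1 := by
  have h : w ^ (p^t).totient ≡ 1 [MOD p^t] := Nat.ModEq.pow_totient (hw.pow_right t)
  have h2 := h.dvd
  push_cast at h2
  simpa using (dvd_neg.mpr h2)

/-- exact integer Euler quotient -/
def Qq (p t w : ℕ) : ℤ := ((w:ℤ)^((p^t).totient) - 1) / (p:ℤ)^t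

lemma Qq_mul {p : ℕ} (hp : p.Prime) (t w : ℕ) (hw : Nat.Coprime w p) :
    (p:ℤ)^t * Qq p t w = (w:ℤ)^((p^t).totient) - 1 :=
  Int.mul_ediv_cancel' (euler_dvd hp t w hw)

lemma eulerQuotient_int {p : ℕ} (hp : p.Prime) (t w : ℕ) (hw : Nat.Coprime w p) :
    (eulerQuotient p t w : ℤ) = Qq p t w % (p:ℤ)^t := by
  have hw1 : 1 ≤ w ^ (p^t).totient :=
    Nat.one_le_pow _ _ (Nat.pos_of_ne_zero (coprime_ne_zero hp hw))
  rw [eulerQuotient, if_pos hw, Qq]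
  push_cast [hw1]
  rfl

lemma totient_mul {p r : ℕ} (hp : p.Prime) (hr : 2 ≤ r) :
    (p^r).totient = p * (p^(r-1)).totient := by
  rw [Nat.totient_prime_pow hp (by omega), Nat.totient_prime_pow hp (by omega : 1 ≤ r - 1)]
  rw [← mul_assoc, ← pow_succ']
  congr 2
  omega

lemma Qq_diff_dvd {p r w : ℕ} (hp : p.Prime) (hodd : Odd p) (hr : 1 ≤ r)
    (hw : Nat.Coprime w p) : (p:ℤ)^(r-1) ∣ Qq p r w - Qq p (r-1) w := by
  rcases eq_or_lt_of_le hr with h1 | h2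
  · simp [← h1]
  · have hr2 : 2 ≤ r := h2
    set s := r - 1 with hs
    have hs1 : 1 ≤ s := by omega
    set x := Qq p (r-1) w with hx
    have hmul := Qq_mul hp (r-1) w hw
    have hpow : (w:ℤ)^((p^(r-1)).totient) = 1 + x * (p:ℤ)^s := by
      rw [hs]; linarith [hmul]
    have hk := key2 hp hodd hs1 x
    rw [← hpow] at hk
    have hm : (p^r).totient = (p^(r-1)).totient * p := by
      rw [totient_mul hp hr2]; ring
    have hww : ((w:ℤ)^((p^(r-1)).totient))^p = (w:ℤ)^((p^r).totient) := by
      rw [← pow_mul, hm]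
    rw [hww] at hk
    have hmul2 := Qq_mul hp r w hw
    have hsum : (w:ℤ)^((p^r).totient) - 1 - x*(p:ℤ)^(s+1) =
        (p:ℤ)^r * (Qq p r w - Qq p (r-1) w) := by
      rw [show s + 1 = r by omega]
      rw [mul_sub, hmul2, hx]
      have : (p:ℤ)^r * Qq p (r-1) w = x * (p:ℤ)^r := by rw [hx]; ring
      rw [this]
    rw [hsum] at hk
    have hfac : (p:ℤ)^(2*s+1) = (p:ℤ)^r * (p:ℤ)^(r-1) := by
      rw [← pow_add]; congr 1; omega
    rw [hfac] at hk
    exact (mul_dvd_mul_iff_left (pow_ne_zero r (by exact_mod_cast hp.pos.ne' : (p:ℤ) ≠ 0))).mp hk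

lemma Ediff_dvd {p r w : ℕ} (hp : p.Prime) (hodd : Odd p) (hr : 1 ≤ r)
    (hw : Nat.Coprime w p) :
    (p:ℤ)^(r-1) ∣ (eulerQuotient p r w : ℤ) - (eulerQuotient p (r-1) w : ℤ) := by
  rw [eulerQuotient_int hp r w hw, eulerQuotient_int hp (r-1) w hw]
  rw [Int.emod_def, Int.emod_def]
  have h1 : (p:ℤ)^(r-1) ∣ (p:ℤ)^r := pow_dvd_pow (p:ℤ) (by omega : r - 1 ≤ r)
  have := Qq_diff_dvd hp hodd hr hw
  have h2 : (p:ℤ)^(r-1) ∣ (p:ℤ)^(r-1) * (Qq p (r-1) w / (p:ℤ)^(r-1)) := Dvd.intro _ rfl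
  have h3 : (p:ℤ)^(r-1) ∣ (p:ℤ)^r * (Qq p r w / (p:ℤ)^r) := h1.mul_right _
  have h4 := (dvd_sub (Qq_diff_dvd hp hodd hr hw) h3).add h2
  convert h4 using 1
  · rfl
  · ring

lemma toNat_emod_cast (p : ℕ) [NeZero p] (x : ℤ) :
    (((x % (p:ℤ)).toNat : ℕ) : ZMod p) = (x : ZMod p) := by
  have hp0 : (0:ℤ) < p := by
    have := Nat.pos_of_ne_zero (NeZero.ne p); exact_mod_cast this
  have h := Int.emod_nonneg x hp0.ne'
  have h2 : (((x % (p:ℤ)).toNat : ℤ) : ZMod p) = ((x % (p:ℤ) : ℤ) : ZMod p) := by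
    rw [Int.toNat_of_nonneg h]
  rw [show (((x % (p:ℤ)).toNat : ℕ) : ZMod p) = (((x % (p:ℤ)).toNat : ℤ) : ZMod p) by
    push_cast; ring, h2, Int.emod_def]
  push_cast
  simp

lemma levelQuotient_lt {p : ℕ} (hp : 0 < p) (r u : ℕ) : levelQuotient p r u < p := by
  rw [levelQuotient]
  have h1 := Int.emod_nonneg ((((eulerQuotient p r u : ℤ) - (eulerQuotient p (r - 1) u : ℤ))
    / (p : ℤ) ^ (r - 1))) (show (p:ℤ) ≠ 0 by exact_mod_cast hp.ne')
  have h2 := Int.emod_lt_of_pos ((((eulerQuotient p r u : ℤ) - (eulerQuotient p (r - 1) u : ℤ))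
    / (p : ℤ) ^ (r - 1))) (show (0:ℤ) < p by exact_mod_cast hp)
  omega

lemma shift {p r : ℕ} (hp : p.Prime) (hodd : Odd p) (hr : 1 ≤ r) (v k : ℕ)
    (hv : Nat.Coprime v p) :
    (levelQuotient p r (v + k * p^r) : ZMod p) =
      (levelQuotient p r v : ZMod p) - (k : ZMod p) * (v : ZMod p)^((p^r).totient - 1) := by
  haveI : NeZero p := ⟨hp.pos.ne'⟩
  set u := v + k * p^r with hu_def
  have hu : Nat.Coprime u p := by
    have e : u = v + (k * p^(r-1)) * p := by
      rw [hu_def, mul_assoc, ← pow_succ, show r - 1 + 1 = r from by omega]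
    rw [e]
    exact (Nat.coprime_add_mul_right_left v p _).mpr hv
  have hp0 : ((p:ℤ)) ≠ 0 := by exact_mod_cast hp.pos.ne'
  set m := (p^r).totient with hm
  have hcu : (u:ℤ) = (v:ℤ) + (k:ℤ)*(p:ℤ)^r := by rw [hu_def]; push_cast; ring
  -- Step A : lower Euler quotients agree
  have hA : (eulerQuotient p (r-1) u : ℤ) = (eulerQuotient p (r-1) v : ℤ) := by
    rcases eq_or_lt_of_le hr with h1 | h2
    · rw [eulerQuotient_int hp _ _ hu, eulerQuotient_int hp _ _ hv, ← h1]
      norm_num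
    · have hr2 : 2 ≤ r := h2
      set m' := (p^(r-1)).totient with hm'
      obtain ⟨z, hz⟩ := int_add_pow (v:ℤ) ((k:ℤ)*(p:ℤ)^r) m'
      have hm'eq : (m' : ℤ) = (p:ℤ)^(r-2) * ((p:ℤ) - 1) := by
        rw [hm', Nat.totient_prime_pow hp (by omega : 1 ≤ r - 1)]
        push_cast [hp.one_le]
        rw [Nat.sub_sub]
      have e1 : (p:ℤ)^(r-2) * (p:ℤ)^r = (p:ℤ)^(2*r-2) := by rw [← pow_add]; congr 1; omega
      have e2 : ((p:ℤ)^r)^2 = (p:ℤ)^(2*r-2) * (p:ℤ)^2 := by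
        rw [← pow_mul, ← pow_add]; congr 1; omega
      have hdiff : (u:ℤ)^m' - (v:ℤ)^m' =
          (p:ℤ)^(2*r-2) * (((p:ℤ)-1) * (v:ℤ)^(m'-1) * k + z * k^2 * (p:ℤ)^2) := by
        rw [hcu, hz, hm'eq]
        linear_combination (((p:ℤ)-1) * (v:ℤ)^(m'-1) * (k:ℤ)) * e1 + (z*(k:ℤ)^2) * e2
      have hQu := Qq_mul hp (r-1) u hu
      have hQv := Qq_mul hp (r-1) v hv
      have hfac : (p:ℤ)^(r-1) * (Qq p (r-1) u - Qq p (r-1) v) = (u:ℤ)^m' - (v:ℤ)^m' := by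
        rw [mul_sub, hQu, hQv]; ring
      have h2d : (p:ℤ)^(2*r-2) = (p:ℤ)^(r-1) * (p:ℤ)^(r-1) := by
        rw [← pow_add]; congr 1; omega
      have hdvd : (p:ℤ)^(r-1) ∣ Qq p (r-1) u - Qq p (r-1) v := by
        have heq : (p:ℤ)^(r-1) * (Qq p (r-1) u - Qq p (r-1) v) =
            (p:ℤ)^(r-1) * ((p:ℤ)^(r-1) * (((p:ℤ)-1) * (v:ℤ)^(m'-1) * k + z * k^2 * (p:ℤ)^2)) := by
          rw [hfac, hdiff, h2d]; ring
        exact ⟨_, mul_left_cancel₀ (pow_ne_zero _ hp0) heq⟩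
      rw [eulerQuotient_int hp _ _ hu, eulerQuotient_int hp _ _ hv]
      exact Int.ModEq.symm (Int.modEq_iff_dvd.mpr hdvd)
  -- Step B : top Euler quotient shifts
  obtain ⟨z, hz⟩ := int_add_pow (v:ℤ) ((k:ℤ)*(p:ℤ)^r) m
  have hmeq : (m:ℤ) = (p:ℤ)^(r-1) * ((p:ℤ)-1) := by
    rw [hm, Nat.totient_prime_pow hp hr]; push_cast [hp.one_le]; ring
  have hQu := Qq_mul hp r u hu
  have hQv := Qq_mul hp r v hv
  have hfac : (p:ℤ)^r * (Qq p r u - Qq p r v) =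
      (p:ℤ)^r * ((m:ℤ) * (v:ℤ)^(m-1) * k + z * k^2 * (p:ℤ)^r) := by
    rw [mul_sub, hQu, hQv, hcu, hz]; ring
  have hdivQ : Qq p r u - Qq p r v = (m:ℤ) * (v:ℤ)^(m-1) * k + z * k^2 * (p:ℤ)^r :=
    mul_left_cancel₀ (pow_ne_zero r hp0) hfac
  have hpr : (p:ℤ)^r = (p:ℤ)^(r-1) * p := by
    rw [← pow_succ, show r - 1 + 1 = r from by omega]
  have hEu : (eulerQuotient p r u : ℤ) = Qq p r u - (p:ℤ)^r * (Qq p r u / (p:ℤ)^r) := by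
    rw [eulerQuotient_int hp _ _ hu, Int.emod_def]
  have hEv : (eulerQuotient p r v : ℤ) = Qq p r v - (p:ℤ)^r * (Qq p r v / (p:ℤ)^r) := by
    rw [eulerQuotient_int hp _ _ hv, Int.emod_def]
  set d1 := Qq p r u / (p:ℤ)^r with hd1
  set d2 := Qq p r v / (p:ℤ)^r with hd2
  set Eu := (eulerQuotient p r u : ℤ)
  set Ev := (eulerQuotient p r v : ℤ)
  set F := (eulerQuotient p (r-1) v : ℤ)
  set b : ℤ := ((p:ℤ)-1)*(v:ℤ)^(m-1)*k + (z*(k:ℤ)^2 + d2 - d1)*p with hb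
  have e2 : Eu - F = (Ev - F) + b * (p:ℤ)^(r-1) := by
    rw [hb]
    have e1 : Eu - Ev = (Qq p r u - Qq p r v) - (p:ℤ)^r * d1 + (p:ℤ)^r * d2 := by
      rw [hEu, hEv]; ring
    linear_combination e1 + hdivQ + (v:ℤ)^(m-1)*(k:ℤ)*hmeq + (z*(k:ℤ)^2 - d1 + d2)*hpr
  have hY := Ediff_dvd hp hodd hr hv
  have hdiv1 : (Eu - F) / (p:ℤ)^(r-1) = (Ev - F)/(p:ℤ)^(r-1) + b := by
    rw [e2, Int.add_mul_ediv_right _ _ (pow_ne_zero _ hp0)]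
  show ((((Eu - (eulerQuotient p (r-1) u : ℤ)) / (p:ℤ)^(r-1)) % (p:ℤ)).toNat : ZMod p) =
    ((((Ev - F) / (p:ℤ)^(r-1)) % (p:ℤ)).toNat : ZMod p) - (k : ZMod p) * (v : ZMod p)^(m-1)
  rw [hA]
  rw [toNat_emod_cast, toNat_emod_cast, hdiv1, hb]
  push_cast
  simp only [ZMod.natCast_self]
  ring

lemma key {p r : ℕ} (hp : p.Prime) (hodd : Odd p) (hr : 1 ≤ r) (l : ℕ) (hl : l < p)
    (v : ℕ) (hv : Nat.Coprime v p) :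
    ∃! k : ℕ, k < p ∧ levelQuotient p r (v + k * p^r) = l := by
  haveI : Fact p.Prime := ⟨hp⟩
  set w : ZMod p := (v : ZMod p)^((p^r).totient - 1) with hw
  have hvz : (v : ZMod p) ≠ 0 := by
    rw [Ne, ZMod.natCast_eq_zero_iff]
    exact (hp.coprime_iff_not_dvd).mp hv.symm
  have hwz : w ≠ 0 := pow_ne_zero _ hvz
  set κ : ZMod p := ((levelQuotient p r v : ZMod p) - l) * w⁻¹ with hκ
  have hκval : (κ.val : ZMod p) = κ := by simp [ZMod.natCast_val, ZMod.cast_id]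
  refine ⟨κ.val, ⟨ZMod.val_lt κ, ?_⟩, ?_⟩
  · have hs := shift hp hodd hr v κ.val hv
    rw [hκval] at hs
    have hval : (levelQuotient p r (v + κ.val * p^r) : ZMod p) = (l : ZMod p) := by
      rw [hs, hκ, ← hw, mul_assoc, inv_mul_cancel₀ hwz, mul_one]
      ring
    have h1 : levelQuotient p r (v + κ.val * p^r) < p := levelQuotient_lt hp.pos _ _
    have h2 := congrArg ZMod.val hval
    rwa [ZMod.val_cast_of_lt h1, ZMod.val_cast_of_lt hl] at h2
  · rintro k' ⟨hk', hlq⟩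
    have hs := shift hp hodd hr v k' hv
    rw [hlq, ← hw] at hs
    have hkw : (k' : ZMod p) * w = (levelQuotient p r v : ZMod p) - l := by
      linear_combination hs
    have hkκ : (k' : ZMod p) = κ := by
      calc (k' : ZMod p) = ((k' : ZMod p) * w) * w⁻¹ := by field_simp
        _ = κ := by rw [hkw, hκ]
    have := congrArg ZMod.val hkκ
    rwa [ZMod.val_cast_of_lt hk'] at this

lemma cop_mod {p r u : ℕ} (hp : p.Prime) (hr : 1 ≤ r) (h : u.Coprime p) :
    (u % p^r).Coprime p := by
  have hd : p ∣ p^r := dvd_pow_self p (by omega)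
  exact ((hp.coprime_iff_not_dvd).mpr
    (fun hdvd => (hp.coprime_iff_not_dvd).mp h.symm ((Nat.dvd_mod_iff hd).mp hdvd))).symm


/-- For `D_l = {u : 0 ≤ u < p^{r+1}, gcd(u,p)=1, H_{r-1}(u)=l}`, reduction modulo `p^r`
is a bijection from `D_l` to `(ℤ/p^r)^*`; in particular `|D_l| = p^{r-1}(p-1)`. -/
theorem levelQuotient_fiber_bijOn (p r l : ℕ) (hp : p.Prime) (hodd : Odd p)
    (hr : 1 ≤ r) (hl : l < p) :
    let D : Finset ℕ := (Finset.range (p ^ (r + 1))).filter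
      (fun u => Nat.Coprime u p ∧ levelQuotient p r u = l)
    Set.BijOn (fun u : ℕ => (u : ZMod (p ^ r))) ↑D {x : ZMod (p ^ r) | IsUnit x} ∧
      D.card = p ^ (r - 1) * (p - 1) := by
  intro D
  haveI : Fact p.Prime := ⟨hp⟩
  haveI : NeZero (p^r) := ⟨pow_ne_zero r hp.pos.ne'⟩
  have hD : ∀ u, u ∈ D ↔ u < p^(r+1) ∧ Nat.Coprime u p ∧ levelQuotient p r u = l := by
    intro u
    simp [D, Finset.mem_filter, Finset.mem_range, and_assoc]
  have decomp : ∀ u ∈ D, u = u % p^r + (u / p^r) * p^r ∧ u / p^r < p ∧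
      (u % p^r).Coprime p ∧ u % p^r < p^r := by
    intro u hu
    obtain ⟨h1, h2, h3⟩ := (hD u).mp hu
    refine ⟨(Nat.mod_add_div' u (p^r)).symm, ?_, cop_mod hp hr h2,
      Nat.mod_lt u (Nat.pow_pos hp.pos)⟩
    rw [Nat.div_lt_iff_lt_mul (Nat.pow_pos hp.pos)]
    calc u < p^(r+1) := h1
      _ = p * p^r := by rw [pow_succ]; ring
  have mk_mem : ∀ v k : ℕ, v < p^r → Nat.Coprime v p → k < p →
      levelQuotient p r (v + k * p^r) = l → (v + k * p^r) ∈ D := fun v k hvlt hvc hk hlq => by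
    rw [hD]
    refine ⟨?_, ?_, hlq⟩
    · calc v + k * p^r < p^r + k * p^r := Nat.add_lt_add_right hvlt _
        _ = (k+1) * p^r := by ring
        _ ≤ p * p^r := Nat.mul_le_mul_right _ (by omega)
        _ = p^(r+1) := by rw [pow_succ]; ring
    · have e : v + k * p^r = v + (k * p^(r-1)) * p := by
        rw [mul_assoc, ← pow_succ, show r - 1 + 1 = r from by omega]
      rw [e]
      exact (Nat.coprime_add_mul_right_left v p _).mpr hvc
  have hbij : Set.BijOn (fun u : ℕ => (u : ZMod (p ^ r))) ↑D {x : ZMod (p ^ r) | IsUnit x} := by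
    refine ⟨?_, ?_, ?_⟩
    · intro u hu
      obtain ⟨_, h2, _⟩ := (hD u).mp hu
      exact (ZMod.isUnit_iff_coprime u (p^r)).mpr (h2.pow_right r)
    · intro u₁ h₁ u₂ h₂ heq
      obtain ⟨e₁, hk₁, hc₁, hv₁⟩ := decomp u₁ h₁
      obtain ⟨e₂, hk₂, hc₂, hv₂⟩ := decomp u₂ h₂
      have hmod : u₁ % p^r = u₂ % p^r := by
        have := (ZMod.natCast_eq_natCast_iff u₁ u₂ (p^r)).mp heq
        exact this
      obtain ⟨_, _, lq₁⟩ := (hD u₁).mp h₁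
      obtain ⟨_, _, lq₂⟩ := (hD u₂).mp h₂
      have huniq := key hp hodd hr l hl (u₁ % p^r) hc₁
      have hkeq : u₁ / p^r = u₂ / p^r := by
        apply huniq.unique (y₁ := u₁ / p^r) (y₂ := u₂ / p^r)
        · exact ⟨hk₁, by rw [← e₁]; exact lq₁⟩
        · exact ⟨hk₂, by rw [hmod, ← e₂]; exact lq₂⟩
      calc u₁ = u₁ % p^r + (u₁ / p^r) * p^r := e₁
        _ = u₂ % p^r + (u₂ / p^r) * p^r := by rw [hmod, hkeq]
        _ = u₂ := e₂.symm
    · intro x hx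
      have hxu : IsUnit x := hx
      set v := x.val with hv_def
      have hvlt : v < p^r := ZMod.val_lt x
      have hvx : ((v : ℕ) : ZMod (p^r)) = x := by
        simp [hv_def, ZMod.natCast_val, ZMod.cast_id]
      have hvc : Nat.Coprime v p := by
        have h1 : IsUnit ((v : ℕ) : ZMod (p^r)) := by rw [hvx]; exact hxu
        have h2 : Nat.Coprime v (p^r) := (ZMod.isUnit_iff_coprime v (p^r)).mp h1
        exact Nat.Coprime.coprime_dvd_right (dvd_pow_self p (by omega)) h2
      obtain ⟨k, ⟨hk, hlq⟩, _⟩ := key hp hodd hr l hl v hvc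
      refine ⟨v + k * p^r, mk_mem v k hvlt hvc hk hlq, ?_⟩
      show ((v + k * p^r : ℕ) : ZMod (p^r)) = x
      rw [Nat.cast_add, Nat.cast_mul, ZMod.natCast_self (p^r)]
      simpa using hvx
  refine ⟨hbij, ?_⟩
  have himg : (fun u : ℕ => (u : ZMod (p^r))) '' ↑D = {x : ZMod (p^r) | IsUnit x} :=
    hbij.image_eq
  have h1 : ({x : ZMod (p^r) | IsUnit x}).ncard = D.card := by
    rw [← himg, Set.ncard_image_of_injOn hbij.injOn, Set.ncard_coe_finset]
  have e : (ZMod (p^r))ˣ ≃ {x : ZMod (p^r) // IsUnit x} :=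
    ⟨fun u => ⟨u, u.isUnit⟩, fun x => x.2.unit,
      fun u => Units.ext u.isUnit.unit_spec, fun x => Subtype.ext x.2.unit_spec⟩
  have h2 : ({x : ZMod (p^r) | IsUnit x}).ncard = (p^r).totient := by
    have h3 : Nat.card ↥{x : ZMod (p^r) | IsUnit x} = Nat.card (ZMod (p^r))ˣ :=
      Nat.card_congr (Equiv.symm e)
    rw [← Nat.card_coe_set_eq, h3, Nat.card_eq_fintype_card,
      ZMod.card_units_eq_totient]
  rw [← h1, h2, Nat.totient_prime_pow hp hr]
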